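/- Let k ≥ 1 and m ≥ 1 be integers, let b₁, …, b_k be nonzero real numbers, and let Ã be a nonzero real polynomial in the variables x₁, …, x_k. Set A = (b₁x₁ + ⋯ + b_kx_k)^m · Ã. Then n(A) ≥ Σ_{i=1}^{k} n_i(Ã). -/

import Mathlib

open MvPolynomial Finsupp

lemma aux_homL {k : ℕ} (b : Fin k → ℝ) :
    IsHomogeneous (∑ j : Fin k, C (b j) * X j) 1 :=
  IsHomogeneous.sum _ _ _ fun _ _ => isHomogeneous_C_mul_X _ _

lemma aux_eq_single {k : ℕ} (f : Fin k →₀ ℕ) (i : Fin k) (m : ℕ)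
    (h1 : m ≤ f i) (h2 : f.degree ≤ m) : f = Finsupp.single i m := by
  have hfi : f i = m := le_antisymm ((Finsupp.le_degree i f).trans h2) h1
  rcases Nat.eq_zero_or_pos m with rfl | hm
  · have : f = 0 := (Finsupp.degree_eq_zero_iff f).1 (Nat.le_zero.1 h2)
    simp [this]
  · have hi : i ∈ f.support := Finsupp.mem_support_iff.2 (by omega)
    ext j
    rcases eq_or_ne j i with rfl | hj
    · simp [hfi]
    · rw [Finsupp.single_eq_of_ne' (Ne.symm hj)]
      by_contra hfj
      have hjs : j ∈ f.support.erase i :=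
        Finset.mem_erase.2 ⟨hj, Finsupp.mem_support_iff.2 hfj⟩
      have h3 : f i + ∑ x ∈ f.support.erase i, f x = f.degree :=
        Finset.add_sum_erase _ f hi
      have h4 : f j ≤ ∑ x ∈ f.support.erase i, f x :=
        Finset.single_le_sum (fun x _ => Nat.zero_le _) hjs
      omega

lemma aux_coeffL {k : ℕ} (b : Fin k → ℝ) (i : Fin k) :
    coeff (Finsupp.single i 1) (∑ j : Fin k, C (b j) * X j) = b i := by
  classical
  rw [coeff_sum]
  rw [Finset.sum_eq_single i]
  · simp [coeff_C_mul, coeff_X']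
  · intro j _ hj
    rw [coeff_C_mul, coeff_X', if_neg, mul_zero]
    simp [Finsupp.single_eq_single_iff, hj]
  · simp

lemma aux_coeffLm {k : ℕ} (b : Fin k → ℝ) (i : Fin k) (m : ℕ) :
    coeff (Finsupp.single i m) ((∑ j : Fin k, C (b j) * X j) ^ m) = b i ^ m := by
  classical
  induction m with
  | zero => simp
  | succ n ih =>
    have hhomn : IsHomogeneous ((∑ j : Fin k, C (b j) * X j) ^ n) n := by
      simpa using (aux_homL b).pow n
    rw [pow_succ, mul_comm, coeff_mul]
    rw [Finset.sum_eq_single (Finsupp.single i 1, Finsupp.single i n)]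
    · rw [aux_coeffL, ih, pow_succ, mul_comm]
    · rintro ⟨u, v⟩ hp hne
      simp only [Finset.HasAntidiagonal.mem_antidiagonal] at hp
      by_contra hc
      have hu : coeff u (∑ j : Fin k, C (b j) * X j) ≠ 0 := fun h => hc (by simp [h])
      have hv : coeff v ((∑ j : Fin k, C (b j) * X j) ^ n) ≠ 0 := fun h => hc (by simp [h])
      have hud : u.degree = 1 := by
        by_contra h; exact hu ((aux_homL b).coeff_eq_zero h)
      have hvd : v.degree = n := by
        by_contra h; exact hv (hhomn.coeff_eq_zero h)
      have hui : 1 ≤ u i := by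
        have h1 : u i + v i = n + 1 := by
          have := DFunLike.congr_fun hp i
          simpa using this
        have h2 : v i ≤ v.degree := Finsupp.le_degree i v
        omega
      have hueq : u = Finsupp.single i 1 := aux_eq_single u i 1 hui hud.le
      have hveq : v = Finsupp.single i n := by
        have h5 : u + v = u + Finsupp.single i n := by
          rw [hp, hueq, ← Finsupp.single_add]
          congr 1
          omega
        exact add_left_cancel h5
      exact hne (by rw [hueq, hveq])
    · intro h
      exact absurd (Finset.HasAntidiagonal.mem_antidiagonal.2
        (by rw [← Finsupp.single_add, add_comm 1 n])) h

/-- Key lemma: multiplying by `L^m` where the target exponent has maximal `i`-degree. -/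
lemma aux_key {k : ℕ} (b : Fin k → ℝ) (i : Fin k) (m : ℕ)
    (Q : MvPolynomial (Fin k) ℝ) (e : Fin k →₀ ℕ)
    (he : ∀ v ∈ Q.support, v i ≤ e i) :
    coeff (e + Finsupp.single i m) ((∑ j : Fin k, C (b j) * X j) ^ m * Q)
      = b i ^ m * coeff e Q := by
  classical
  have hhom : IsHomogeneous ((∑ j : Fin k, C (b j) * X j) ^ m) m := by
    simpa using (aux_homL b).pow m
  rw [coeff_mul]
  rw [Finset.sum_eq_single (Finsupp.single i m, e)]
  · rw [aux_coeffLm]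
  · rintro ⟨u, v⟩ hp hne
    simp only [Finset.HasAntidiagonal.mem_antidiagonal] at hp
    by_contra hc
    have hu : coeff u ((∑ j : Fin k, C (b j) * X j) ^ m) ≠ 0 := fun h => hc (by simp [h])
    have hv : coeff v Q ≠ 0 := fun h => hc (by simp [h])
    have hud : u.degree = m := by
      by_contra h; exact hu (hhom.coeff_eq_zero h)
    have hvi : v i ≤ e i := he v (MvPolynomial.mem_support_iff.2 hv)
    have hui : m ≤ u i := by
      have h1 : u i + v i = e i + m := by
        have := DFunLike.congr_fun hp i
        simpa using this
      omega
    have hueq : u = Finsupp.single i m := aux_eq_single u i m hui hud.le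
    have hveq : v = e := by
      have h5 : u + v = u + e := by rw [hp, hueq, add_comm e]
      exact add_left_cancel h5
    exact hne (by rw [hueq, hveq])
  · intro h
    exact absurd (Finset.HasAntidiagonal.mem_antidiagonal.2 (add_comm _ _)) h

/-- For `A = (b₁x₁ + ⋯ + b_kx_k)^m * Ã` with all `bᵢ ≠ 0`, `m ≥ 1` and
`Ã ≠ 0`, the number of monomials `n(A)` is at least `Σᵢ nᵢ(Ã)`, where `nᵢ(Ã)` counts the
monomials of `Ã` whose `xᵢ`-degree is maximal among the monomials of `Ã`. -/
theorem statement0 (k m : ℕ) (hk : 1 ≤ k) (hm : 1 ≤ m)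
    (b : Fin k → ℝ) (hb : ∀ i, b i ≠ 0)
    (Atil : MvPolynomial (Fin k) ℝ) (hA : Atil ≠ 0) :
    ∑ i : Fin k,
        (Atil.support.filter (fun d => d i = Atil.support.sup (fun e => e i))).card
      ≤ (((∑ i : Fin k, C (b i) * X i) ^ m * Atil).support).card := by
  classical
  set A : MvPolynomial (Fin k) ℝ := (∑ i : Fin k, C (b i) * X i) ^ m * Atil with hAdef
  set D : Fin k → ℕ := fun i => Atil.support.sup (fun e => e i) with hD
  set S : Fin k → Finset (Fin k →₀ ℕ) :=
    fun i => Atil.support.filter (fun d => d i = D i) with hS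
  set T : Fin k → Finset (Fin k →₀ ℕ) :=
    fun i => (S i).image (fun e => e + Finsupp.single i m) with hT
  have hmemT : ∀ i d, d ∈ T i ↔ ∃ e ∈ Atil.support, e i = D i ∧ d = e + Finsupp.single i m := by
    intro i d
    simp only [hT, Finset.mem_image, hS, Finset.mem_filter]
    constructor
    · rintro ⟨e, ⟨he1, he2⟩, rfl⟩; exact ⟨e, he1, he2, rfl⟩
    · rintro ⟨e, he1, he2, rfl⟩; exact ⟨e, ⟨he1, he2⟩, rfl⟩
  -- each T i is contained in the support of A
  have hsub : ∀ i, T i ⊆ A.support := by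
    intro i d hd
    rw [hmemT] at hd
    obtain ⟨e, he1, he2, rfl⟩ := hd
    rw [MvPolynomial.mem_support_iff, hAdef,
      aux_key b i m Atil e (fun v hv => (Finset.le_sup (f := fun e => e i) hv).trans_eq he2.symm)]
    exact mul_ne_zero (pow_ne_zero _ (hb i)) (MvPolynomial.mem_support_iff.1 he1)
  -- the T i are pairwise disjoint
  have hdisj : ∀ i ∈ Finset.univ, ∀ j ∈ Finset.univ, i ≠ j →
      Disjoint (T i) (T j) := by
    intro i _ j _ hij
    rw [Finset.disjoint_left]
    intro d hdi hdj
    rw [hmemT] at hdi hdj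
    obtain ⟨e, he1, he2, rfl⟩ := hdi
    obtain ⟨f, hf1, hf2, hef⟩ := hdj
    have h2 := DFunLike.congr_fun hef j
    simp only [Finsupp.add_apply, Finsupp.single_apply, if_neg hij,
      if_pos rfl, add_zero, eq_self_iff_true, if_true] at h2
    have h3 : e j ≤ D j := Finset.le_sup (f := fun e => e j) he1
    omega
  calc ∑ i : Fin k, (S i).card
      = ∑ i : Fin k, (T i).card := by
        refine Finset.sum_congr rfl fun i _ => ?_
        rw [hT]
        exact (Finset.card_image_of_injective _ (add_left_injective _)).symm
    _ = (Finset.univ.biUnion T).card := (Finset.card_biUnion hdisj).symm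
    _ ≤ A.support.card := Finset.card_le_card (Finset.biUnion_subset.2 fun i _ => hsub i)
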